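/- In the same construction, if there exists a precedence-feasible spanning arborescence rooted at r, then Φ is satisfiable. Specifically: (a) the arborescence contains no directed path from s' to t; (b) the unique path P from r to t passes through s and through exactly one literal vertex of each clause layer; (c) no directed path of the arborescence contains two literal vertices corresponding to a variable and its negation; hence assigning true to all variables whose (unnegated) literals appear on P ∩ C, and false to all remaining variables, satisfies every clause. -/

import Mathlib

def IsPathIn {V : Type*} (T : Set (V × V)) (r j : V) (p : List V) : Prop :=
  p.head? = some r ∧ p.getLast? = some j ∧ p.Chain' (fun a b => (a, b) ∈ T)

def IsSpanningArborescence {V : Type*} (T : Set (V × V)) (r : V) : Prop :=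
  (∀ j : V, j ≠ r → ∃! i : V, (i, j) ∈ T) ∧ (∀ i : V, (i, r) ∉ T) ∧
    ∀ j : V, ∃! p : List V, IsPathIn T r j p

inductive SatVert (m : ℕ) : Type
  | root | s | s' | t
  | lit (i : Fin (m + 1)) (k : Fin 3)
  deriving DecidableEq

def SatArcs (m : ℕ) : Set (SatVert m × SatVert m) :=
  {a | a = (SatVert.root, SatVert.s) ∨ a = (SatVert.root, SatVert.s') ∨
    (∃ j : Fin 3, a = (SatVert.s, SatVert.lit 0 j)) ∨
    (∃ (i : Fin m) (j k : Fin 3), a = (SatVert.lit i.castSucc j, SatVert.lit i.succ k)) ∨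
    (∃ j : Fin 3, a = (SatVert.lit (Fin.last m) j, SatVert.t)) ∨
    (∃ (i : Fin (m + 1)) (j : Fin 3), a = (SatVert.s', SatVert.lit i j))}

def SatPrec (m : ℕ) (C : Fin (m + 1) → Fin 3 → ℕ × Bool) : Set (SatVert m × SatVert m) :=
  {a | a = (SatVert.t, SatVert.s') ∨
    ∃ (h i : Fin (m + 1)) (k j : Fin 3), (i : ℕ) < (h : ℕ) ∧
      (C h k).1 = (C i j).1 ∧ (C h k).2 ≠ (C i j).2 ∧
      a = (SatVert.lit h k, SatVert.lit i j)}


def litOf (m : ℕ) (n : ℕ) (k : Fin 3) : SatVert m :=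
  if h : n < m + 1 then SatVert.lit ⟨n, h⟩ k else SatVert.t

section Aux
variable {m : ℕ} {T : Set (SatVert m × SatVert m)}

lemma order_lem (hT : T ⊆ SatArcs m) :
    ∀ (y : List (SatVert m)) (h : Fin (m+1)) (k : Fin 3),
      List.Chain' (fun a b => (a, b) ∈ T) (SatVert.lit h k :: y) →
      ∀ (i : Fin (m+1)) (j : Fin 3), SatVert.lit i j ∈ y → (h : ℕ) < (i : ℕ) := by
  intro y
  induction y with
  | nil => intro h k _ i j hm; simp at hm
  | cons b y' ih =>
    intro h k hc i j hm
    obtain ⟨harc, hc'⟩ := List.isChain_cons_cons.mp hc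
    have hA := hT harc
    simp only [SatArcs, Set.mem_setOf_eq] at hA
    rcases hA with h1 | h1 | ⟨j', h1⟩ | ⟨c, j', k', h1⟩ | ⟨j', h1⟩ | ⟨c, j', h1⟩
    · simp at h1
    · simp at h1
    · simp at h1
    · simp only [Prod.mk.injEq, SatVert.lit.injEq] at h1
      obtain ⟨⟨hh1, hh2⟩, hb⟩ := h1
      subst hb
      rcases List.mem_cons.mp hm with he | hm'
      · obtain ⟨hi1, -⟩ := SatVert.lit.inj he.symm
        subst hi1; subst hh1
        simp [Fin.lt_def]
      · have := ih c.succ k' hc' i j hm'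
        subst hh1
        simp only [Fin.coe_castSucc, Fin.val_succ] at *
        omega
    · simp only [Prod.mk.injEq] at h1
      obtain ⟨-, hb⟩ := h1
      subst hb
      cases y' with
      | nil => simp at hm
      | cons c y'' =>
        exfalso
        have harc2 := hT (List.isChain_cons_cons.mp hc').1
        simp only [SatArcs, Set.mem_setOf_eq] at harc2
        rcases harc2 with h2|h2|⟨a,h2⟩|⟨a,b,d,h2⟩|⟨a,h2⟩|⟨a,b,h2⟩ <;> simp at h2
    · simp at h1

lemma prefix_path {r w : SatVert m} {p x y : List (SatVert m)} {v : SatVert m}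
    (hp : IsPathIn T r v p) (hs : p = x ++ w :: y) : IsPathIn T r w (x ++ [w]) := by
  obtain ⟨h1, h2, h3⟩ := hp
  refine ⟨?_, ?_, ?_⟩
  · cases x with
    | nil =>
      rw [hs] at h1
      simpa using h1
    | cons a x' =>
      rw [hs] at h1
      simpa using h1
  · simp
  · exact h3.prefix ⟨y, by simp [hs]⟩

lemma occ_unique (hT : T ⊆ SatArcs m) {p : List (SatVert m)}
    (hch : List.Chain' (fun a b => (a, b) ∈ T) p) {i : Fin (m+1)} {j k : Fin 3}
    (hj : SatVert.lit i j ∈ p) (hk : SatVert.lit i k ∈ p) : j = k := by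
  obtain ⟨x, y, hx⟩ := List.append_of_mem hj
  subst hx
  rcases List.mem_append.mp hk with hkx | hky
  · obtain ⟨x', y', hx'⟩ := List.append_of_mem hkx
    subst hx'
    have hsuf : List.Chain' (fun a b => (a, b) ∈ T)
        (SatVert.lit i k :: (y' ++ SatVert.lit i j :: y)) := by
      refine hch.suffix ⟨x', ?_⟩
      simp
    have := order_lem hT _ i k hsuf i j (by simp)
    omega
  · rcases List.mem_cons.mp hky with he | hy
    · exact (SatVert.lit.inj he).2.symm
    · have hsuf : List.Chain' (fun a b => (a, b) ∈ T) (SatVert.lit i j :: y) :=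
        hch.suffix ⟨x, rfl⟩
      have := order_lem hT _ i j hsuf i k hy
      omega
end Aux
section Shape
variable {m : ℕ} {T : Set (SatVert m × SatVert m)}

lemma shape_lem (hT : T ⊆ SatArcs m) :
    ∀ (p : List (SatVert m)) (v : SatVert m), IsPathIn T SatVert.root v p →
      SatVert.s' ∉ p →
      (p = [SatVert.root] ∧ v = SatVert.root) ∨
      (p = [SatVert.root, SatVert.s] ∧ v = SatVert.s) ∨
      (∃ (n : ℕ) (hn : n < m + 1) (κ : ℕ → Fin 3),
        v = SatVert.lit ⟨n, hn⟩ (κ n) ∧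
        p = SatVert.root :: SatVert.s ::
          (List.range (n+1)).map (fun j => litOf m j (κ j))) ∨
      (∃ κ : ℕ → Fin 3, v = SatVert.t ∧
        p = SatVert.root :: SatVert.s ::
          ((List.range (m+1)).map (fun j => litOf m j (κ j)) ++ [SatVert.t])) := by
  intro p
  induction p using List.reverseRecOn with
  | nil => intro v hp; exact absurd hp.1 (by simp)
  | append_singleton q a ih =>
    intro v hp hs'
    obtain ⟨h1, h2, h3⟩ := hp
    obtain rfl : a = v := by simpa using h2
    cases q with
    | nil =>
      left
      have : a = SatVert.root := by simpa using h1
      subst this; exact ⟨rfl, rfl⟩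
    | cons b q' =>
      have hb : b = SatVert.root := by simpa using h1
      subst hb
      have hqne : (SatVert.root :: q' : List (SatVert m)) ≠ [] := by simp
      set u := (SatVert.root :: q').getLast hqne with hu
      have hul : (SatVert.root :: q').getLast? = some u :=
        List.getLast?_eq_getLast hqne
      have hca := List.isChain_append.mp h3
      have harc : (u, a) ∈ T := hca.2.2 u hul a rfl
      have hq : IsPathIn T SatVert.root u (SatVert.root :: q') := ⟨rfl, hul, hca.1⟩
      have hs'q : SatVert.s' ∉ (SatVert.root :: q' : List (SatVert m)) :=
        fun hm => hs' (List.mem_append_left _ hm)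
      have hs'a : a ≠ SatVert.s' := fun he => hs' (by simp [he])
      have hA := hT harc
      simp only [SatArcs, Set.mem_setOf_eq] at hA
      rcases hA with hA | hA | ⟨j, hA⟩ | ⟨c, j, k, hA⟩ | ⟨j, hA⟩ | ⟨c, j, hA⟩
      · -- (root, s)
        obtain ⟨hu1, ha1⟩ := Prod.mk.inj hA
        subst ha1
        rcases ih u hq hs'q with ⟨hq1, -⟩ | ⟨-, h⟩ | ⟨n, hn, κ, h, -⟩ | ⟨κ, h, -⟩ <;>
          [skip; (exact absurd (hu1 ▸ h) (by simp));
           (exact absurd (hu1 ▸ h) (by simp)); (exact absurd (hu1 ▸ h) (by simp))]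
        right; left
        rw [hq1]; exact ⟨rfl, rfl⟩
      · exact absurd (Prod.mk.inj hA).2 hs'a
      · -- (s, lit 0 j)
        obtain ⟨hu1, ha1⟩ := Prod.mk.inj hA
        subst ha1
        rcases ih u hq hs'q with ⟨-, h⟩ | ⟨hq1, -⟩ | ⟨n, hn, κ, h, -⟩ | ⟨κ, h, -⟩ <;>
          [(exact absurd (hu1 ▸ h) (by simp)); skip;
           (exact absurd (hu1 ▸ h) (by simp)); (exact absurd (hu1 ▸ h) (by simp))]
        right; right; left
        refine ⟨0, by omega, fun _ => j, ?_, ?_⟩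
        · exact congrArg (fun i => SatVert.lit i j) (Fin.ext (by simp))
        · have h0 : litOf m 0 j = SatVert.lit 0 j := by
            rw [litOf, dif_pos (Nat.succ_pos m)]
            exact congrArg (fun i => SatVert.lit i j) (Fin.ext (by simp))
          rw [hq1]
          simp [List.range_succ, h0]
      · -- (lit c.castSucc j, lit c.succ k)
        obtain ⟨hu1, ha1⟩ := Prod.mk.inj hA
        subst ha1
        rcases ih u hq hs'q with ⟨-, h⟩ | ⟨-, h⟩ | ⟨n, hn, κ, h, hq1⟩ | ⟨κ, h, -⟩ <;>
          [(exact absurd (hu1 ▸ h) (by simp)); (exact absurd (hu1 ▸ h) (by simp));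
           skip; (exact absurd (hu1 ▸ h) (by simp))]
        rw [hu1] at h
        obtain ⟨hn1, hκ1⟩ := SatVert.lit.inj h
        have hnc : n = (c : ℕ) := by
          have := congrArg Fin.val hn1
          simp at this
          omega
        subst hnc
        have hn' : (c : ℕ) + 1 < m + 1 := by omega
        right; right; left
        refine ⟨(c : ℕ) + 1, hn', fun x => if x = (c : ℕ) + 1 then k else κ x, ?_, ?_⟩
        · beta_reduce
          rw [if_pos rfl]
          exact congrArg (fun i => SatVert.lit i k) (Fin.ext (by simp))
        · beta_reduce
          have hmapeq : ∀ x ∈ List.range ((c:ℕ)+1),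
              litOf m x (if x = (c:ℕ)+1 then k else κ x) = litOf m x (κ x) := by
            intro x hx
            have hx' : x < (c : ℕ) + 1 := List.mem_range.mp hx
            rw [if_neg (by omega)]
          have hlast : litOf m ((c:ℕ)+1) (if (c:ℕ)+1 = (c:ℕ)+1 then k else κ ((c:ℕ)+1))
              = SatVert.lit c.succ k := by
            rw [if_pos rfl, litOf, dif_pos hn']
            exact (congrArg (fun i => SatVert.lit i k) (Fin.ext (by simp))).symm
          rw [hq1]
          conv_rhs => rw [List.range_succ, List.map_append, List.map_congr_left hmapeq]
          simp only [List.map_cons, List.map_nil, List.cons_append, List.append_nil,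
            List.cons.injEq, if_pos rfl]
          have hl2 : litOf m ((c:ℕ)+1) k = SatVert.lit c.succ k := by
            rw [litOf, dif_pos hn']
            exact congrArg (fun i => SatVert.lit i k) (Fin.ext (by simp))
          simp [hl2]
      · -- (lit (last m) j, t)
        obtain ⟨hu1, ha1⟩ := Prod.mk.inj hA
        subst ha1
        rcases ih u hq hs'q with ⟨-, h⟩ | ⟨-, h⟩ | ⟨n, hn, κ, h, hq1⟩ | ⟨κ, h, -⟩ <;>
          [(exact absurd (hu1 ▸ h) (by simp)); (exact absurd (hu1 ▸ h) (by simp));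
           skip; (exact absurd (hu1 ▸ h) (by simp))]
        rw [hu1] at h
        obtain ⟨hn1, hκ1⟩ := SatVert.lit.inj h
        have hnm : n = m := by
          have := congrArg Fin.val hn1
          simp [Fin.last] at this
          omega
        subst hnm
        right; right; right
        exact ⟨κ, rfl, by rw [hq1]; simp⟩
      · -- (s', lit c j): u = s' ∈ q, contradiction
        exact absurd ((Prod.mk.inj hA).1 ▸ List.getLast_mem hqne) hs'q
end Shape
section Main
variable {m : ℕ} {T : Set (SatVert m × SatVert m)}

lemma mem_litpath {κ : ℕ → Fin 3} {i : Fin (m+1)} {k : Fin 3} :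
    SatVert.lit i k ∈ (List.range (m+1)).map (fun j => litOf m j (κ j)) ↔ k = κ (i : ℕ) := by
  constructor
  · intro hmem
    obtain ⟨a, ha, hq⟩ := List.mem_map.mp hmem
    have ha' : a < m + 1 := List.mem_range.mp ha
    rw [litOf, dif_pos ha'] at hq
    obtain ⟨h1, h2⟩ := SatVert.lit.inj hq
    have : a = (i : ℕ) := by simpa using congrArg Fin.val h1
    rw [← this, h2]
  · intro hk
    refine List.mem_map.mpr ⟨(i : ℕ), List.mem_range.mpr i.isLt, ?_⟩
    rw [litOf, dif_pos i.isLt, ← hk]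

lemma conflict (hT : T ⊆ SatArcs m) {C : Fin (m + 1) → Fin 3 → ℕ × Bool}
    (hfeas : ∀ q ∈ SatPrec m C, ∀ p : List (SatVert m),
      IsPathIn T SatVert.root q.1 p → q.2 ∉ p)
    {v : SatVert m} {p : List (SatVert m)} (hp : IsPathIn T SatVert.root v p)
    {h i : Fin (m+1)} {k j : Fin 3} (hlt : (i : ℕ) < (h : ℕ))
    (hvar : (C h k).1 = (C i j).1) (hne : (C h k).2 ≠ (C i j).2)
    (hh : SatVert.lit h k ∈ p) (hi : SatVert.lit i j ∈ p) : False := by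
  obtain ⟨x, y, hx⟩ := List.append_of_mem hh
  have hchain := hp.2.2
  rw [hx] at hi
  rcases List.mem_append.mp hi with hix | hiy
  · have hpath : IsPathIn T SatVert.root (SatVert.lit h k) (x ++ [SatVert.lit h k]) :=
      prefix_path hp hx
    have hmem : (SatVert.lit h k, SatVert.lit i j) ∈ SatPrec m C := by
      simp only [SatPrec, Set.mem_setOf_eq]
      exact Or.inr ⟨h, i, k, j, hlt, hvar, hne, rfl⟩
    exact hfeas _ hmem _ hpath (List.mem_append.mpr (Or.inl hix))
  · rcases List.mem_cons.mp hiy with he | hiy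
    · obtain ⟨h1, -⟩ := SatVert.lit.inj he
      have := congrArg Fin.val h1
      omega
    · have hsuf : List.Chain' (fun a b => (a, b) ∈ T) (SatVert.lit h k :: y) :=
        hchain.suffix ⟨x, hx.symm⟩
      have := order_lem hT y h k hsuf i j hiy
      omega
end Main

/-- converse direction of the 3-SAT reduction: if the constructed
graph admits a precedence-feasible spanning arborescence rooted at `root`, then
(a) it contains no directed path from `s'` to `t`; (b) the path from `root` to `t`
passes through `s` and through exactly one literal vertex of each clause layer;
(c) no directed path of the arborescence contains two literal vertices of the same
variable with opposite signs; and hence the formula is satisfiable. -/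
theorem stmt8 (m : ℕ) (C : Fin (m + 1) → Fin 3 → ℕ × Bool)
    (T : Set (SatVert m × SatVert m)) (hT : T ⊆ SatArcs m)
    (harb : IsSpanningArborescence T SatVert.root)
    (hfeas : ∀ q ∈ SatPrec m C, ∀ p : List (SatVert m),
      IsPathIn T SatVert.root q.1 p → q.2 ∉ p) :
    (¬ ∃ p : List (SatVert m), IsPathIn T SatVert.s' SatVert.t p) ∧
    (∀ p : List (SatVert m), IsPathIn T SatVert.root SatVert.t p →
      SatVert.s ∈ p ∧ ∀ i : Fin (m + 1), ∃! k : Fin 3, SatVert.lit i k ∈ p) ∧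
    (∀ (v : SatVert m) (p : List (SatVert m)), IsPathIn T SatVert.root v p →
      ∀ (h i : Fin (m + 1)) (k j : Fin 3), SatVert.lit h k ∈ p → SatVert.lit i j ∈ p →
        (C h k).1 = (C i j).1 → (C h k).2 = (C i j).2) ∧
    ∃ σ : ℕ → Bool, ∀ i : Fin (m + 1), ∃ k : Fin 3, σ (C i k).1 = (C i k).2 := by
  classical
  have hts' : (SatVert.t, SatVert.s') ∈ SatPrec m C := by
    exact Or.inl rfl
  -- part (c)
  have hc : ∀ (v : SatVert m) (p : List (SatVert m)), IsPathIn T SatVert.root v p →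
      ∀ (h i : Fin (m + 1)) (k j : Fin 3), SatVert.lit h k ∈ p → SatVert.lit i j ∈ p →
        (C h k).1 = (C i j).1 → (C h k).2 = (C i j).2 := by
    intro v p hp h i k j hh hi hvar
    by_contra hne
    rcases lt_trichotomy (i : ℕ) (h : ℕ) with hlt | heq | hlt
    · exact conflict hT hfeas hp hlt hvar hne hh hi
    · have : i = h := Fin.ext heq
      subst this
      have := occ_unique hT hp.2.2 hh hi
      rw [this] at hne
      exact hne rfl
    · exact conflict hT hfeas hp hlt hvar.symm (fun e => hne e.symm) hi hh
  refine ⟨?_, ?_, hc, ?_⟩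
  -- part (a)
  · rintro ⟨p, hp⟩
    obtain ⟨u, hu, -⟩ := harb.1 SatVert.s' (by simp)
    have hu' : u = SatVert.root := by
      have hA := hT hu
      simp only [SatArcs, Set.mem_setOf_eq] at hA
      rcases hA with h1 | h1 | ⟨j, h1⟩ | ⟨i, j, k, h1⟩ | ⟨j, h1⟩ | ⟨i, j, h1⟩ <;> simp_all
    subst hu'
    obtain ⟨h1, h2, h3⟩ := hp
    cases p with
    | nil => simp at h1
    | cons a rest =>
      have ha : a = SatVert.s' := by simpa using h1
      subst ha
      have hp' : IsPathIn T SatVert.root SatVert.t (SatVert.root :: SatVert.s' :: rest) := by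
        refine ⟨rfl, ?_, ?_⟩
        · rw [List.getLast?_cons_cons]
          exact h2
        · exact List.isChain_cons_cons.mpr ⟨hu, h3⟩
      exact hfeas _ hts' _ hp' (by simp)
  -- part (b)
  · intro p hp
    have hs'p : SatVert.s' ∉ p := hfeas _ hts' _ hp
    rcases shape_lem hT p SatVert.t hp hs'p with ⟨-, h⟩ | ⟨-, h⟩ | ⟨n, hn, κ, h, -⟩ | ⟨κ, -, hp'⟩
    · exact absurd h (by simp)
    · exact absurd h (by simp)
    · exact absurd h (by simp)
    · subst hp'
      refine ⟨by simp, fun i => ⟨κ (i : ℕ), ?_, ?_⟩⟩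
      · simp only [List.mem_cons, List.mem_append, List.mem_singleton]
        exact Or.inr (Or.inr (Or.inl (mem_litpath.mpr rfl)))
      · intro k hk
        simp only [List.mem_cons, List.mem_append, List.mem_singleton] at hk
        rcases hk with hk | hk | hk | hk
        · exact absurd hk (by simp)
        · exact absurd hk (by simp)
        · exact mem_litpath.mp hk
        · exact absurd hk (by simp)
  -- part (d)
  · obtain ⟨P, hP, -⟩ := harb.2.2 SatVert.t
    have hs'p : SatVert.s' ∉ P := hfeas _ hts' _ hP
    rcases shape_lem hT P SatVert.t hP hs'p with ⟨-, h⟩ | ⟨-, h⟩ | ⟨n, hn, κ, h, -⟩ | ⟨κ, -, hp'⟩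
    · exact absurd h (by simp)
    · exact absurd h (by simp)
    · exact absurd h (by simp)
    · have hmem : ∀ h : Fin (m+1), SatVert.lit h (κ (h : ℕ)) ∈ P := by
        intro h
        rw [hp']
        simp only [List.mem_cons, List.mem_append, List.mem_singleton]
        exact Or.inr (Or.inr (Or.inl (mem_litpath.mpr rfl)))
      refine ⟨fun n => decide (∃ h : Fin (m+1), (C h (κ (h : ℕ))).1 = n ∧
        (C h (κ (h : ℕ))).2 = true), fun i => ⟨κ (i : ℕ), ?_⟩⟩
      by_cases hb : (C i (κ (i : ℕ))).2 = true
      · rw [hb, decide_eq_true_eq]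
        exact ⟨i, rfl, hb⟩
      · have hb' : (C i (κ (i : ℕ))).2 = false := by simpa using hb
        rw [hb', decide_eq_false_iff_not]
        rintro ⟨h, hvar, htrue⟩
        have := hc SatVert.t P hP h i (κ (h : ℕ)) (κ (i : ℕ)) (hmem h) (hmem i) hvar
        rw [htrue, hb'] at this
        exact absurd this (by simp)
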